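/- Let H be an m×n matrix with entries in {0,1}, and let ω ∈ P(H) be a nonzero pseudo-codeword such that every column index i ∈ supp(ω) has column weight at least 2 in H (i.e., no active variable node has degree one). Then the Tanner graph of H contains a cycle all of whose variable-node vertices belong to supp(ω); in particular, the active part of any nonzero pseudo-codeword contains at least one cycle or at least one degree-one variable node. -/

import Mathlib

/-- The fundamental polytope `P(H)` of a matrix `H` (with entries in `{0,1}`). -/
def inFP {α β : Type} [Fintype α] [Fintype β] [DecidableEq β]
    (H : Matrix α β ℤ) (ω : β → ℝ) : Prop :=
  (∀ i, 0 ≤ ω i ∧ ω i ≤ 1) ∧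
  ∀ (j : α) (S : Finset β),
    (∀ i ∈ S, H j i = 1) → Odd S.card →
    (∑ i ∈ S, ω i) - (∑ i ∈ (Finset.univ.filter fun i => H j i = 1) \ S, ω i)
      ≤ (S.card : ℝ) - 1

/-- The Tanner graph of `H`: a bipartite simple graph on variable nodes
`Fin n` (left) and check nodes `Fin m` (right), with `i` adjacent to `j`
iff `H j i = 1`. -/
def tannerGraph {m n : ℕ} (H : Matrix (Fin m) (Fin n) ℤ) :
    SimpleGraph (Fin n ⊕ Fin m) :=
  SimpleGraph.fromRel fun x y =>
    match x, y with
    | Sum.inl i, Sum.inr j => H j i = 1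
    | _, _ => False

open SimpleGraph

/-- The "active" subgraph of the Tanner graph: only edges whose variable
endpoint lies in the support of `ω`. -/
def activeGraph {m n : ℕ} (H : Matrix (Fin m) (Fin n) ℤ) (ω : Fin n → ℝ) :
    SimpleGraph (Fin n ⊕ Fin m) :=
  SimpleGraph.fromRel fun x y =>
    match x, y with
    | Sum.inl i, Sum.inr j => H j i = 1 ∧ ω i ≠ 0
    | _, _ => False

lemma activeGraph_adj_inl_inr {m n : ℕ} {H : Matrix (Fin m) (Fin n) ℤ}
    {ω : Fin n → ℝ} {i : Fin n} {j : Fin m} :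
    (activeGraph H ω).Adj (Sum.inl i) (Sum.inr j) ↔ H j i = 1 ∧ ω i ≠ 0 := by
  simp [activeGraph, SimpleGraph.fromRel_adj]

lemma activeGraph_adj_cases {m n : ℕ} {H : Matrix (Fin m) (Fin n) ℤ}
    {ω : Fin n → ℝ} {x y : Fin n ⊕ Fin m}
    (h : (activeGraph H ω).Adj x y) :
    ∃ i j, H j i = 1 ∧ ω i ≠ 0 ∧
      ((x = Sum.inl i ∧ y = Sum.inr j) ∨ (x = Sum.inr j ∧ y = Sum.inl i)) := by
  rcases x with i | j <;> rcases y with i' | j' <;>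
    simp [activeGraph, SimpleGraph.fromRel_adj] at h
  · exact ⟨i, j', h.1, h.2, Or.inl ⟨rfl, rfl⟩⟩
  · exact ⟨i', j, h.1, h.2, Or.inr ⟨rfl, rfl⟩⟩

lemma activeGraph_le {m n : ℕ} {H : Matrix (Fin m) (Fin n) ℤ} {ω : Fin n → ℝ} :
    activeGraph H ω ≤ tannerGraph H := by
  intro x y h
  obtain ⟨i, j, h1, _, hc⟩ := activeGraph_adj_cases h
  rcases hc with ⟨rfl, rfl⟩ | ⟨rfl, rfl⟩ <;>
    simp [tannerGraph, SimpleGraph.fromRel_adj, h1]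

/-- In a path, at most one edge issues from the final vertex. -/
lemma lastEdgeUnique {V : Type*} {G : SimpleGraph V} {u v w₁ w₂ : V}
    (p : G.Walk u v) (hp : p.IsPath)
    (h1 : s(v, w₁) ∈ p.edges) (h2 : s(v, w₂) ∈ p.edges) : w₁ = w₂ := by
  induction p with
  | nil => simp at h1
  | @cons u x v h q ih =>
    rw [Walk.cons_isPath_iff] at hp
    have hkey : ∀ w : V, s(v, w) = s(u, x) → v = x ∧ w = u := by
      intro w hw
      rw [Sym2.eq_iff] at hw
      rcases hw with ⟨rfl, rfl⟩ | ⟨rfl, rfl⟩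
      · exact absurd q.end_mem_support hp.2
      · exact ⟨rfl, rfl⟩
    rw [Walk.edges_cons, List.mem_cons] at h1 h2
    rcases h1 with h1 | h1 <;> rcases h2 with h2 | h2
    · rw [(hkey _ h1).2, (hkey _ h2).2]
    · obtain ⟨rfl, rfl⟩ := hkey _ h1
      rw [Walk.isPath_iff_eq_nil.mp hp.1] at h2
      simp at h2
    · obtain ⟨rfl, rfl⟩ := hkey _ h2
      rw [Walk.isPath_iff_eq_nil.mp hp.1] at h1
      simp at h1
    · exact ih hp.1 h1 h2

/-- Every vertex on a walk is either the final vertex or has a neighbor. -/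
lemma support_adj {V : Type*} {G : SimpleGraph V} {u v : V}
    (p : G.Walk u v) {x : V} (hx : x ∈ p.support) :
    x = v ∨ ∃ y, G.Adj x y := by
  induction p with
  | nil => simp at hx; exact Or.inl hx
  | @cons a b c h q ih =>
    rw [Walk.support_cons, List.mem_cons] at hx
    rcases hx with rfl | hx
    · exact Or.inr ⟨b, h⟩
    · exact ih hx

/-- If `ω` is a nonzero pseudo-codeword of `H` and every variable node in the
support of `ω` has degree at least `2` in the Tanner graph of `H`, then the
Tanner graph contains a cycle all of whose variable nodes lie in `supp(ω)`
(i.e. the active part of the pseudo-codeword contains a cycle). -/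
theorem active_part_contains_cycle
    {m n : ℕ} (H : Matrix (Fin m) (Fin n) ℤ)
    (hH01 : ∀ j i, H j i = 0 ∨ H j i = 1)
    (ω : Fin n → ℝ) (hω : inFP H ω) (hne : ω ≠ 0)
    (hdeg : ∀ i : Fin n, ω i ≠ 0 →
      2 ≤ (Finset.univ.filter fun j => H j i = 1).card) :
    ∃ (v : Fin n ⊕ Fin m) (w : (tannerGraph H).Walk v v),
      w.IsCycle ∧ ∀ i : Fin n, Sum.inl i ∈ w.support → ω i ≠ 0 := by
  classical
  set G' := activeGraph H ω with hG'
  -- every check adjacent to an active variable has another active neighbor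
  have hcheck : ∀ (j : Fin m) (i : Fin n), H j i = 1 → ω i ≠ 0 →
      ∃ i', i' ≠ i ∧ H j i' = 1 ∧ ω i' ≠ 0 := by
    intro j i hHji hωi
    have hpos : 0 < ω i := lt_of_le_of_ne (hω.1 i).1 (Ne.symm hωi)
    have key := hω.2 j {i} (by simpa using hHji) (by simp)
    simp only [Finset.sum_singleton, Finset.card_singleton, Nat.cast_one,
      sub_self] at key
    by_contra hcon
    push_neg at hcon
    have hsum0 : ∑ i'' ∈ (Finset.univ.filter fun i'' => H j i'' = 1) \ {i},
        ω i'' = 0 := by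
      apply Finset.sum_eq_zero
      intro x hx
      rw [Finset.mem_sdiff, Finset.mem_filter, Finset.mem_singleton] at hx
      by_contra hx0
      exact hx0 (hcon x hx.2 hx.1.2)
    rw [hsum0, sub_zero] at key
    linarith
  -- every vertex with a neighbor has two
  have htwo : ∀ x y, G'.Adj x y → ∃ z, G'.Adj x z ∧ z ≠ y := by
    intro x y hxy
    obtain ⟨i, j, h1, h2, hc⟩ := activeGraph_adj_cases hxy
    rcases hc with ⟨rfl, rfl⟩ | ⟨rfl, rfl⟩
    · obtain ⟨j', hj'mem, hj'ne⟩ :=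
        Finset.exists_mem_ne (lt_of_lt_of_le one_lt_two (hdeg i h2)) j
      rw [Finset.mem_filter] at hj'mem
      exact ⟨Sum.inr j', activeGraph_adj_inl_inr.mpr ⟨hj'mem.2, h2⟩,
        fun hh => hj'ne (Sum.inr.inj hh)⟩
    · obtain ⟨i', hi'ne, hHi', hωi'⟩ := hcheck j i h1 h2
      exact ⟨Sum.inl i', (activeGraph_adj_inl_inr.mpr ⟨hHi', hωi'⟩).symm,
        fun hh => hi'ne (Sum.inl.inj hh)⟩
  -- adjacency forces the variable endpoint to be active
  have hact : ∀ (i : Fin n) y, G'.Adj (Sum.inl i) y → ω i ≠ 0 := by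
    intro i y h
    obtain ⟨i', j', _, h2, hc⟩ := activeGraph_adj_cases h
    rcases hc with ⟨hx, _⟩ | ⟨hx, _⟩
    · rwa [← Sum.inl.inj hx] at h2
    · exact absurd hx (by simp)
  -- G' has an edge
  obtain ⟨i0, hi0⟩ : ∃ i0, ω i0 ≠ 0 := Function.ne_iff.mp hne
  obtain ⟨j0, hj0⟩ : ∃ j0, j0 ∈ Finset.univ.filter fun j => H j i0 = 1 :=
    Finset.card_pos.mp (lt_of_lt_of_le two_pos (hdeg i0 hi0)) |>.elim fun j hj => ⟨j, hj⟩
  rw [Finset.mem_filter] at hj0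
  have e0 : G'.Adj (Sum.inl i0) (Sum.inr j0) :=
    activeGraph_adj_inl_inr.mpr ⟨hj0.2, hi0⟩
  -- a maximum-length path in G'
  set L : Set ℕ := {k | ∃ (u v : Fin n ⊕ Fin m) (p : G'.Walk u v),
    p.IsPath ∧ p.length = k} with hL
  have hbdd : BddAbove L := by
    refine ⟨Fintype.card (Fin n ⊕ Fin m), ?_⟩
    rintro k ⟨u, v, p, hp, rfl⟩
    exact le_of_lt hp.length_lt
  have h1L : (1 : ℕ) ∈ L := by
    refine ⟨Sum.inl i0, Sum.inr j0, Walk.cons e0 Walk.nil, ?_, rfl⟩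
    rw [Walk.cons_isPath_iff]
    exact ⟨Walk.IsPath.nil, by simp⟩
  have hLne : L.Nonempty := ⟨1, h1L⟩
  obtain ⟨u, v, p, hp, hplen⟩ := Nat.sSup_mem hLne hbdd
  have hmax : ∀ k ∈ L, k ≤ sSup L := fun k hk => le_csSup hbdd hk
  have hlen1 : 1 ≤ p.length := hplen ▸ hmax 1 h1L
  -- every neighbor of the endpoint v lies on p
  have hsupp : ∀ w, G'.Adj v w → w ∈ p.support := by
    intro w hw
    by_contra hns
    have hwr : w ∉ p.reverse.support := by
      rw [Walk.support_reverse]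
      simpa using hns
    have hpath : (Walk.cons hw.symm p.reverse).IsPath := by
      rw [Walk.cons_isPath_iff]
      exact ⟨hp.reverse, hwr⟩
    have hmem : p.length + 1 ∈ L :=
      ⟨w, u, Walk.cons hw.symm p.reverse, hpath, by simp⟩
    have := hmax _ hmem
    omega
  -- v has a last-edge-avoiding neighbor
  have hpn : ¬ p.reverse.Nil := by
    rw [Walk.not_nil_iff_lt_length, Walk.length_reverse]; omega
  obtain ⟨x, hvx, q, hq⟩ := Walk.not_nil_iff.mp hpn
  obtain ⟨z, hvz, hzx⟩ := htwo v x hvx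
  have hw : ∃ w, G'.Adj v w ∧ s(v, w) ∉ p.edges := by
    by_cases hex : s(v, x) ∈ p.edges
    · refine ⟨z, hvz, fun hez => hzx (lastEdgeUnique p hp hez hex)⟩
    · exact ⟨x, hvx, hex⟩
  obtain ⟨w, hvw, hwe⟩ := hw
  have hws : w ∈ p.support := hsupp w hvw
  set d := p.dropUntil w hws with hd_def
  have hd : d.IsPath := hp.dropUntil hws
  have hde : s(v, w) ∉ d.edges := fun h => hwe (p.edges_dropUntil_subset hws h)
  have hcyc : (Walk.cons hvw d).IsCycle :=
    SimpleGraph.Path.cons_isCycle ⟨d, hd⟩ hvw hde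
  -- map into the Tanner graph
  refine ⟨v, (Walk.cons hvw d).mapLe activeGraph_le, hcyc.mapLe _, ?_⟩
  intro i hi
  have hsupport : ((Walk.cons hvw d).mapLe activeGraph_le).support
      = (Walk.cons hvw d).support := by
    rw [Walk.support_map]
    exact List.map_id' _
  rw [hsupport] at hi
  rcases support_adj _ hi with hiv | ⟨y, hy⟩
  · exact hact i w (hiv ▸ hvw)
  · exact hact i y hy
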